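/- Fix an integer n ≥ 3. For every z ∈ (1, ∞): the partial derivative of g(n, ·, α) with respect to z, evaluated at α = 1, equals 0; and the partial derivative of g(n, ·, α) with respect to z, evaluated at α = ln(n−1)/ln z, equals 0 if z = n−1 and is strictly negative if z ≠ n−1. -/

import Mathlib

open Real

/-- `g(n, z, α) = (α−1) + ((n−1) + z^α)(z^{1−α} − 1)/(((n−1) + z) ln z)`. -/
noncomputable def gZ (n : ℕ) (z α : ℝ) : ℝ :=
  (α - 1) + (((n : ℝ) - 1) + z ^ α) * (z ^ (1 - α) - 1) / ((((n : ℝ) - 1) + z) * Real.log z)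

lemma lemA1 (u : ℝ) (hu : 1 < u) : 2*u*Real.log u < u^2 - 1 := by
  have hd : ∀ x : ℝ, 0 < x →
      HasDerivAt (fun x : ℝ => x^2 - 1 - 2*(x*Real.log x)) (2*x - 2*(Real.log x + 1)) x := by
    intro x hx
    have h1 : HasDerivAt (fun x : ℝ => x^2) (2*x) x := by simpa using hasDerivAt_pow 2 x
    have h2 : HasDerivAt (fun x : ℝ => x*Real.log x) (1*Real.log x + x*x⁻¹) x :=
      (hasDerivAt_id x).mul (Real.hasDerivAt_log hx.ne')
    have h3 := (h1.sub_const 1).sub (h2.const_mul 2)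
    refine h3.congr_deriv ?_
    rw [mul_inv_cancel₀ hx.ne']; ring
  have key : StrictMonoOn (fun x : ℝ => x^2 - 1 - 2*(x*Real.log x)) (Set.Ici 1) := by
    apply strictMonoOn_of_deriv_pos (convex_Ici 1)
    · intro x hx
      exact (hd x (lt_of_lt_of_le one_pos hx)).differentiableAt.continuousAt.continuousWithinAt
    · intro x hx
      rw [interior_Ici] at hx
      have hx1 : 1 < x := hx
      rw [(hd x (by linarith)).deriv]
      have := Real.log_lt_sub_one_of_pos (by linarith : (0:ℝ) < x) (by linarith : x ≠ 1)
      linarith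
  have h0 := key (Set.self_mem_Ici) (Set.mem_Ici.2 hu.le) hu
  simp at h0
  linarith

lemma lemB1 (u : ℝ) (hu : 1 < u) : 2*(u-1) < (u+1)*Real.log u := by
  have hd : ∀ x : ℝ, 0 < x →
      HasDerivAt (fun x : ℝ => (x+1)*Real.log x - 2*(x-1)) (Real.log x + x⁻¹ - 1) x := by
    intro x hx
    have h1 : HasDerivAt (fun x : ℝ => (x+1)*Real.log x) (1*Real.log x + (x+1)*x⁻¹) x :=
      ((hasDerivAt_id x).add_const 1).mul (Real.hasDerivAt_log hx.ne')
    have h2 : HasDerivAt (fun x : ℝ => 2*(x-1)) 2 x := by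
      simpa using ((hasDerivAt_id x).sub_const 1).const_mul 2
    have h3 := h1.sub h2
    refine h3.congr_deriv ?_
    rw [add_mul, mul_inv_cancel₀ hx.ne']
    ring
  have key : StrictMonoOn (fun x : ℝ => (x+1)*Real.log x - 2*(x-1)) (Set.Ici 1) := by
    apply strictMonoOn_of_deriv_pos (convex_Ici 1)
    · intro x hx
      exact (hd x (lt_of_lt_of_le one_pos hx)).differentiableAt.continuousAt.continuousWithinAt
    · intro x hx
      rw [interior_Ici] at hx
      have hx1 : 1 < x := hx
      have hx0 : (0:ℝ) < x := by linarith
      rw [(hd x hx0).deriv]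
      have hinv : x⁻¹ ≠ 1 := by
        intro heq
        rw [inv_eq_one] at heq
        linarith
      have := Real.log_lt_sub_one_of_pos (inv_pos.2 hx0) hinv
      rw [Real.log_inv] at this
      linarith
  have h0 := key (Set.self_mem_Ici) (Set.mem_Ici.2 hu.le) hu
  simp at h0
  linarith

lemma lemA2 (c z : ℝ) (hc : 0 < c) (h : c < z) :
    4*c*z*(Real.log z - Real.log c) < 2*(z^2 - c^2) := by
  have hz : 0 < z := lt_trans hc h
  have hu : 1 < z/c := (one_lt_div hc).2 h
  have h1 := lemA1 _ hu
  rw [Real.log_div hz.ne' hc.ne'] at h1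
  have h2 : 2*c^2 * (2*(z/c)*(Real.log z - Real.log c)) < 2*c^2 * ((z/c)^2 - 1) :=
    mul_lt_mul_of_pos_left h1 (by positivity)
  have e1 : 2*c^2 * (2*(z/c)*(Real.log z - Real.log c)) = 4*c*z*(Real.log z - Real.log c) := by
    field_simp; ring
  have e2 : 2*c^2 * ((z/c)^2 - 1) = 2*(z^2 - c^2) := by
    field_simp
  rw [e1, e2] at h2
  exact h2

lemma lemB2 (z c : ℝ) (hz : 0 < z) (h : z < c) :
    2*(c - z) < (c+z)*(Real.log c - Real.log z) := by
  have hc : 0 < c := lt_trans hz h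
  have hu : 1 < c/z := (one_lt_div hz).2 h
  have h1 := lemB1 _ hu
  rw [Real.log_div hc.ne' hz.ne'] at h1
  have h2 : z * (2*(c/z - 1)) < z * ((c/z+1)*(Real.log c - Real.log z)) :=
    mul_lt_mul_of_pos_left h1 hz
  have e1 : z * (2*(c/z - 1)) = 2*(c - z) := by field_simp
  have e2 : z * ((c/z+1)*(Real.log c - Real.log z)) = (c+z)*(Real.log c - Real.log z) := by
    field_simp
  rw [e1, e2] at h2
  exact h2

theorem stmt18 (n : ℕ) (hn : 3 ≤ n) (z : ℝ) (hz : 1 < z) :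
    deriv (fun z' => gZ n z' 1) z = 0 ∧
    (z = (n : ℝ) - 1 →
      deriv (fun z' => gZ n z' (Real.log ((n : ℝ) - 1) / Real.log z)) z = 0) ∧
    (z ≠ (n : ℝ) - 1 →
      deriv (fun z' => gZ n z' (Real.log ((n : ℝ) - 1) / Real.log z)) z < 0) := by
  have hz0 : (0:ℝ) < z := lt_trans one_pos hz
  have hL : 0 < Real.log z := Real.log_pos hz
  have hn3 : (3:ℝ) ≤ (n:ℝ) := by exact_mod_cast hn
  set c : ℝ := (n:ℝ) - 1 with hcdef
  have hc2 : (2:ℝ) ≤ c := by rw [hcdef]; linarith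
  have hc0 : (0:ℝ) < c := by linarith
  have hc1 : (1:ℝ) < c := by linarith
  have hM : 0 < Real.log c := Real.log_pos hc1
  set L : ℝ := Real.log z with hLdef
  set M : ℝ := Real.log c with hMdef
  have hconst : (fun z' : ℝ => gZ n z' 1) = fun _ => (0:ℝ) := by
    funext z'
    simp [gZ]
  refine ⟨?_, ?_, ?_⟩
  · rw [hconst]; exact deriv_const z 0
  · intro hzc
    have h1 : M / L = 1 := by
      rw [hMdef, hLdef, ← hzc]
      exact div_self hL.ne'
    rw [h1, hconst]
    exact deriv_const z 0
  · intro hzc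
    set a : ℝ := M / L with hadef
    have haL : a * L = M := div_mul_cancel₀ _ hL.ne'
    have hza : z ^ a = c := by
      rw [Real.rpow_def_of_pos hz0]
      have : Real.log z * a = M := by rw [mul_comm]; exact haL
      rw [← hLdef, this, hMdef, Real.exp_log hc0]
    have hza1 : z ^ (a - 1) = c / z := by
      rw [Real.rpow_sub hz0, Real.rpow_one, hza]
    have h1a : z ^ (1 - a) = z / c := by
      rw [Real.rpow_sub hz0, Real.rpow_one, hza]
    have hma : z ^ (1 - a - 1) = z / c / z := by
      rw [Real.rpow_sub hz0, h1a, Real.rpow_one]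
    have hDpos : 0 < (c + z) * L := by
      apply mul_pos (by linarith) hL
    have hN : HasDerivAt (fun z' : ℝ => (c + z' ^ a) * (z' ^ (1 - a) - 1))
        ((a * z ^ (a-1)) * (z ^ (1-a) - 1) + (c + z ^ a) * ((1-a) * z ^ (1-a-1))) z :=
      ((Real.hasDerivAt_rpow_const (p := a) (Or.inl hz0.ne')).const_add c).mul
        ((Real.hasDerivAt_rpow_const (p := 1-a) (Or.inl hz0.ne')).sub_const 1)
    have hDd : HasDerivAt (fun z' : ℝ => (c + z') * Real.log z')
        (1 * L + (c + z) * z⁻¹) z :=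
      ((hasDerivAt_id z).const_add c).mul (Real.hasDerivAt_log hz0.ne')
    have hdiv := (hN.div hDd hDpos.ne').const_add (a - 1)
    have hfun : (fun z' : ℝ => gZ n z' a) =
        (fun z' : ℝ => (a - 1) + (c + z' ^ a) * (z' ^ (1 - a) - 1) / ((c + z') * Real.log z')) := by
      funext z'
      rw [gZ, ← hcdef]
    rw [hfun, (show HasDerivAt (fun z' : ℝ => (a - 1) + (c + z' ^ a) * (z' ^ (1 - a) - 1) / ((c + z') * Real.log z')) _ z from hdiv).deriv]
    rw [hza, hza1, h1a, hma]
    set Num : ℝ := ((a * (c / z)) * (z / c - 1) + (c + c) * ((1-a) * (z / c / z))) * ((c + z) * L)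
        - (c + c) * (z / c - 1) * (1 * L + (c + z) * z⁻¹) with hNumdef
    have hkey : 0 < M*(z-c)^2 + 2*(z^2-c^2) - 4*c*z*(L - M) := by
      rcases lt_or_gt_of_ne hzc with hlt | hgt
      · -- z < c
        have hB := lemB2 z c hz0 hlt
        have h3 : (c+z)*(2*(c-z)) < (c+z)*((c+z)*(M - L)) := by
          apply mul_lt_mul_of_pos_left _ (by linarith : (0:ℝ) < c + z)
          rw [hMdef, hLdef]
          exact hB
        have h4 : 0 ≤ L*(z-c)^2 := mul_nonneg hL.le (sq_nonneg _)
        linarith [h3, h4]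
      · -- c < z
        have hA := lemA2 c z hc0 hgt
        rw [← hLdef, ← hMdef] at hA
        linarith [hA, mul_nonneg hM.le (sq_nonneg (z-c))]
    have hNumval : Num = -((M*(z-c)^2 + 2*(z^2-c^2) - 4*c*z*(L - M)) / z) := by
      rw [hNumdef, hadef]
      field_simp
      ring
    have hNumneg : Num < 0 := by
      rw [hNumval]
      have : 0 < (M*(z-c)^2 + 2*(z^2-c^2) - 4*c*z*(L - M)) / z := div_pos hkey hz0
      linarith
    exact div_neg_of_neg_of_pos hNumneg (by positivity)
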